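/- Let G be a finite weighted graph and let H* be an induced subgraph of G with density d* > 0. Then the (2d*/3)-core of G has total edge weight at least W(H*)/3. -/
import Mathlib


open Finset

variable {V : Type*} [Fintype V] [DecidableEq V]

/-- Weighted degree of vertex `v` in the subgraph induced on `S`. -/
def wDeg (w : V → V → ℝ) (S : Finset V) (v : V) : ℝ := ∑ u ∈ S, w v u

/-- Total edge weight of the subgraph induced on `S`. -/
noncomputable def wTot (w : V → V → ℝ) (S : Finset V) : ℝ :=
  (∑ u ∈ S, ∑ x ∈ S, w u x) / 2

/-- Density of the subgraph induced on `S`. -/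
noncomputable def dens (w : V → V → ℝ) (S : Finset V) : ℝ := wTot w S / S.card

lemma wTot_erase (w : V → V → ℝ) (hsymm : ∀ u v, w u v = w v u) (hdiag : ∀ v, w v v = 0)
    {S : Finset V} {v : V} (hv : v ∈ S) :
    wTot w (S.erase v) = wTot w S - wDeg w S v := by
  unfold wTot wDeg
  have h1 : ∀ u, ∑ x ∈ S, w u x = ∑ x ∈ S.erase v, w u x + w u v :=
    fun u => (Finset.sum_erase_add S _ hv).symm
  have h2 : ∑ u ∈ S, ∑ x ∈ S, w u x
      = ∑ u ∈ S.erase v, ∑ x ∈ S.erase v, w u x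
        + (∑ u ∈ S.erase v, w u v + (∑ x ∈ S.erase v, w v x + w v v)) := by
    rw [← Finset.sum_erase_add S _ hv]
    simp_rw [h1]
    rw [Finset.sum_add_distrib]
    ring
  have h3 : ∑ u ∈ S.erase v, w u v = ∑ x ∈ S.erase v, w v x :=
    Finset.sum_congr rfl fun u _ => hsymm u v
  have h4 : ∑ x ∈ S, w v x = ∑ x ∈ S.erase v, w v x := by
    rw [← Finset.sum_erase_add S _ hv, hdiag]; ring
  rw [h2, hdiag, h3, h4]; ring

lemma peel (w : V → V → ℝ) (hsymm : ∀ u v, w u v = w v u) (hdiag : ∀ v, w v v = 0)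
    (c : ℝ) (hc : 0 ≤ c) (S : Finset V) :
    ∃ T : Finset V, (∀ u ∈ T, c ≤ wDeg w T u) ∧ wTot w S - c * S.card ≤ wTot w T := by
  induction S using Finset.strongInduction with
  | _ S ih =>
    by_cases h : ∀ u ∈ S, c ≤ wDeg w S u
    · refine ⟨S, h, ?_⟩
      have : (0:ℝ) ≤ c * S.card := mul_nonneg hc (Nat.cast_nonneg _)
      linarith
    · push_neg at h
      obtain ⟨v, hv, hdeg⟩ := h
      obtain ⟨T, hT1, hT2⟩ := ih (S.erase v) (Finset.erase_ssubset hv)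
      refine ⟨T, hT1, ?_⟩
      have hcard : ((S.erase v).card : ℝ) = (S.card : ℝ) - 1 := by
        rw [Finset.card_erase_of_mem hv]
        have : 1 ≤ S.card := Finset.card_pos.mpr ⟨v, hv⟩
        push_cast [Nat.cast_sub this]
        ring
      have he := wTot_erase w hsymm hdiag hv
      rw [he, hcard] at hT2
      nlinarith

/-- if H* is an induced subgraph of density d* > 0, then the
(2d*/3)-core of G has total edge weight at least W(H*)/3. -/
theorem stmt5 (w : V → V → ℝ) (hsymm : ∀ u v, w u v = w v u)
    (hnn : ∀ u v, 0 ≤ w u v) (hdiag : ∀ v, w v v = 0)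
    (Hstar : Finset V) (dstar : ℝ) (hd : dens w Hstar = dstar) (hdpos : 0 < dstar) :
    ∃ S : Finset V,
      (∀ u ∈ S, 2 * dstar / 3 ≤ wDeg w S u) ∧
      wTot w Hstar / 3 ≤ wTot w S := by
  have hne : Hstar.Nonempty := by
    by_contra h
    rw [Finset.not_nonempty_iff_eq_empty] at h
    have : dstar = 0 := by rw [← hd]; simp [_root_.dens, wTot, h]
    linarith
  have hcardpos : (0:ℝ) < Hstar.card := by
    exact_mod_cast Finset.card_pos.mpr hne
  have hW : wTot w Hstar = dstar * Hstar.card := by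
    have := hd
    unfold _root_.dens at this
    field_simp at this
    linarith [this]
  obtain ⟨T, hT1, hT2⟩ := peel w hsymm hdiag (2 * dstar / 3) (by linarith) Hstar
  refine ⟨T, hT1, ?_⟩
  rw [hW] at hT2 ⊢
  nlinarith
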